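/- Let q and p₀ be probability distributions on A, let γ ∈ [0,1], and set p = (1−γ)·q + γ·p₀ (componentwise). Then the matrix V(p) − γ·V(p₀) is positive semidefinite. -/

import Mathlib

open Matrix Finset

/-- Mean feature vector `μ(p) = ∑_a p_a φ_a`. -/
noncomputable def featMean {A : Type*} [Fintype A] {d : ℕ} (φ : A → Fin d → ℝ)
    (p : A → ℝ) : Fin d → ℝ :=
  ∑ a, p a • φ a

/-- Centered feature covariance matrix `V(p) = ∑_a p_a φ̄_a φ̄_a^⊤`, where
`φ̄_a = φ_a − μ(p)`. -/
noncomputable def covMat {A : Type*} [Fintype A] {d : ℕ} (φ : A → Fin d → ℝ)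
    (p : A → ℝ) : Matrix (Fin d) (Fin d) ℝ :=
  ∑ a, p a • Matrix.vecMulVec (φ a - featMean φ p) (φ a - featMean φ p)

lemma covMat_herm {A : Type*} [Fintype A] {d : ℕ} (φ : A → Fin d → ℝ) (r : A → ℝ) :
    (covMat φ r).IsHermitian := by
  unfold Matrix.IsHermitian
  ext i j
  simp [covMat, Matrix.conjTranspose_apply, Matrix.sum_apply, Matrix.vecMulVec_apply, mul_comm]

lemma covMat_quad {A : Type*} [Fintype A] {d : ℕ} (φ : A → Fin d → ℝ) (r : A → ℝ)
    (x : Fin d → ℝ) :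
    x ⬝ᵥ (covMat φ r *ᵥ x) = ∑ a, r a * ((φ a - featMean φ r) ⬝ᵥ x) ^ 2 := by
  simp only [covMat, Matrix.mulVec, dotProduct, Matrix.sum_apply, Matrix.smul_apply,
    Matrix.vecMulVec_apply, Pi.sub_apply, smul_eq_mul, Finset.mul_sum, Finset.sum_mul]
  simp_rw [Finset.sum_comm (s := (univ : Finset (Fin d))) (t := (univ : Finset A))]
  refine Finset.sum_congr rfl fun a _ => ?_
  rw [sq, Finset.sum_mul_sum]
  simp only [Finset.mul_sum]
  refine Finset.sum_congr rfl fun i _ => Finset.sum_congr rfl fun j _ => by ring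

lemma featMean_dot {A : Type*} [Fintype A] {d : ℕ} (φ : A → Fin d → ℝ) (r : A → ℝ)
    (x : Fin d → ℝ) : featMean φ r ⬝ᵥ x = ∑ a, r a * (φ a ⬝ᵥ x) := by
  simp [featMean, dotProduct, Finset.sum_mul, Finset.mul_sum]
  rw [Finset.sum_comm]
  exact Finset.sum_congr rfl fun a _ => Finset.sum_congr rfl fun i _ => by ring

/-- mixture domination `V(p) ⪰ γ V(p₀)` from Lemma 11. If `q` and `p₀` are
probability distributions on `A`, `γ ∈ [0,1]`, and `p = (1−γ)q + γp₀` componentwise, then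
`V(p) − γ V(p₀)` is positive semidefinite. -/
theorem mixture_covariance_domination
    {A : Type*} [Fintype A] [Nonempty A] {d : ℕ} (hd : 1 ≤ d)
    (φ : A → Fin d → ℝ) (q p₀ : A → ℝ)
    (hq : ∀ a, 0 ≤ q a) (hq1 : ∑ a, q a = 1)
    (hp₀ : ∀ a, 0 ≤ p₀ a) (hp₀1 : ∑ a, p₀ a = 1)
    (γ : ℝ) (hγ0 : 0 ≤ γ) (hγ1 : γ ≤ 1)
    (p : A → ℝ) (hpdef : ∀ a, p a = (1 - γ) * q a + γ * p₀ a) :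
    (covMat φ p - γ • covMat φ p₀).PosSemidef := by
  rw [Matrix.posSemidef_iff_dotProduct_mulVec]
  constructor
  · refine (covMat_herm φ p).sub ?_
    have h := covMat_herm φ p₀
    unfold Matrix.IsHermitian at h ⊢
    rw [Matrix.conjTranspose_smul, h, star_trivial]
  intro x
  have hstar : star x = x := by simp
  rw [hstar, Matrix.sub_mulVec, dotProduct_sub, Matrix.smul_mulVec,
    dotProduct_smul, covMat_quad, covMat_quad]
  set F : A → ℝ := fun a => φ a ⬝ᵥ x with hF
  have hdot : ∀ (r : A → ℝ) a, (φ a - featMean φ r) ⬝ᵥ x = F a - ∑ b, r b * F b := by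
    intro r a
    rw [sub_dotProduct, featMean_dot]
  simp only [hdot, smul_eq_mul]
  have hp1 : ∑ a, p a = 1 := by
    simp_rw [hpdef]
    rw [Finset.sum_add_distrib, ← Finset.mul_sum, ← Finset.mul_sum, hq1, hp₀1]; ring
  set MQ := ∑ a, q a * F a with hMQ
  set M0 := ∑ a, p₀ a * F a with hM0
  have hMP : ∑ a, p a * F a = (1 - γ) * MQ + γ * M0 := by
    simp_rw [hpdef, add_mul, mul_assoc]
    rw [Finset.sum_add_distrib, ← Finset.mul_sum, ← Finset.mul_sum]
  have expand : ∀ (r : A → ℝ) (c : ℝ), ∑ a, r a * (F a - c) ^ 2 =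
      (∑ a, r a * F a ^ 2) - 2 * c * (∑ a, r a * F a) + c ^ 2 * (∑ a, r a) := by
    intro r c
    rw [Finset.mul_sum, Finset.mul_sum, ← Finset.sum_sub_distrib, ← Finset.sum_add_distrib]
    exact Finset.sum_congr rfl fun a _ => by ring
  have hEp : ∑ a, p a * F a ^ 2 =
      (1 - γ) * (∑ a, q a * F a ^ 2) + γ * (∑ a, p₀ a * F a ^ 2) := by
    simp_rw [hpdef, add_mul, mul_assoc]
    rw [Finset.sum_add_distrib, ← Finset.mul_sum, ← Finset.mul_sum]
  have hvar : MQ ^ 2 ≤ ∑ a, q a * F a ^ 2 := by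
    have h0 : 0 ≤ ∑ a, q a * (F a - MQ) ^ 2 :=
      Finset.sum_nonneg fun a _ => mul_nonneg (hq a) (sq_nonneg _)
    rw [expand q MQ, hq1, ← hMQ] at h0
    nlinarith [h0]
  rw [sub_nonneg, expand, expand, hMP, hEp, hp1, hp₀1, ← hM0]
  nlinarith [mul_nonneg (sub_nonneg.2 hγ1) (sub_nonneg.2 hvar),
    mul_nonneg (mul_nonneg hγ0 (sub_nonneg.2 hγ1)) (sq_nonneg (MQ - M0))]
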